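/- The mean of the Rician Shadowed power distribution with PDF f(x) = (m/(m+K))^m ((1+K)/γ̄) e^{-(1+K)x/γ̄} ₁F₁(m;1; K(1+K)x/(γ̄(m+K))) equals γ̄, i.e. ∫₀^∞ x f(x) dx = γ̄, for m > 0, K ≥ 0, γ̄ > 0. -/

import Mathlib

open Real MeasureTheory Set

noncomputable def poch (a : ℝ) (n : ℕ) : ℝ := (ascPochhammer ℝ n).eval a

/-- Confluent hypergeometric function of the first kind (series). -/
noncomputable def hyp1F1 (a c z : ℝ) : ℝ :=
  ∑' k : ℕ, poch a k / (poch c k * (k.factorial : ℝ)) * z ^ k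

open Filter


lemma poch_zero (a : ℝ) : poch a 0 = 1 := by simp [poch]

lemma poch_succ_right (a : ℝ) (k : ℕ) : poch a (k + 1) = poch a k * (a + k) := by
  simp [poch, ascPochhammer_succ_right]

lemma poch_succ_left (a : ℝ) (k : ℕ) : poch a (k + 1) = a * poch (a + 1) k := by
  simp [poch, ascPochhammer_succ_left, Polynomial.eval_comp]

lemma poch_one_eval (k : ℕ) : poch 1 k = (k.factorial : ℝ) := by
  simpa [poch] using ascPochhammer_eval_one ℝ k

lemma poch_pos {m : ℝ} (hm : 0 < m) (k : ℕ) : 0 < poch m k := by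
  induction k with
  | zero => simp [poch_zero]
  | succ n ih => rw [poch_succ_right]; positivity

lemma Gamma_poch {m : ℝ} (hm : 0 < m) (k : ℕ) :
    Real.Gamma (m + k) = poch m k * Real.Gamma m := by
  induction k with
  | zero => simp [poch_zero]
  | succ n ih =>
    have h : m + (n + 1 : ℕ) = (m + n) + 1 := by push_cast; ring
    rw [h, Real.Gamma_add_one (by positivity), ih, poch_succ_right]; ring

lemma summable_poch {m s : ℝ} (hm : 0 < m) (hs0 : 0 ≤ s) (hs1 : s < 1) :
    Summable (fun k : ℕ => poch m k / k.factorial * s ^ k) := by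
  apply summable_of_ratio_norm_eventually_le (r := (1 + s) / 2) (by linarith)
  have hlim : Tendsto (fun k : ℕ => (m + k) / (k + 1) * s) atTop (nhds s) := by
    have h1 : Tendsto (fun k : ℕ => (m - 1) * (1 / (k + 1)) + 1) atTop (nhds ((m - 1) * 0 + 1)) :=
      ((tendsto_one_div_add_atTop_nhds_zero_nat).const_mul (m - 1)).add tendsto_const_nhds
    have : Tendsto (fun k : ℕ => ((m - 1) * (1 / (k + 1)) + 1) * s) atTop (nhds (((m-1)*0+1) * s)) :=
      h1.mul_const s
    simp only [mul_zero, zero_add, one_mul] at this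
    refine this.congr fun k => ?_
    have hk : ((k : ℝ) + 1) ≠ 0 := by positivity
    field_simp
    ring
  have hev : ∀ᶠ k : ℕ in atTop, (m + k) / (k + 1) * s ≤ (1 + s) / 2 :=
    hlim.eventually_le_const (by linarith)
  filter_upwards [hev] with k hk
  have hfk : (0:ℝ) < k.factorial := by positivity
  have hfk1 : (0:ℝ) < (k+1).factorial := by positivity
  have hterm : poch m (k+1) / (k+1).factorial * s ^ (k+1)
      = ((m + k) / (k + 1) * s) * (poch m k / k.factorial * s ^ k) := by
    rw [poch_succ_right, Nat.factorial_succ, pow_succ]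
    push_cast
    field_simp
  rw [Real.norm_eq_abs, Real.norm_eq_abs, hterm, abs_mul]
  have h1 : |(m + k) / (k + 1) * s| = (m + k) / (k + 1) * s := by
    apply abs_of_nonneg; positivity
  rw [h1]
  exact mul_le_mul_of_nonneg_right hk (abs_nonneg _)

lemma hasSum_binom {m s : ℝ} (hm : 0 < m) (hs0 : 0 ≤ s) (hs1 : s < 1) :
    HasSum (fun k : ℕ => poch m k / k.factorial * s ^ k) ((1 - s) ^ (-m)) := by
  have h1s : (0:ℝ) < 1 - s := by linarith
  set F : ℕ → ℝ → ℝ := fun k u => (s ^ k / k.factorial) * (Real.exp (-u) * u ^ (m + k - 1))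
    with hF
  have hint : ∀ k, Integrable (F k) (volume.restrict (Ioi 0)) := fun k =>
    ((Real.GammaIntegral_convergent (s := m + k) (by positivity)).const_mul _)
  have hval : ∀ k, ∫ u in Ioi (0:ℝ), F k u
      = Real.Gamma m * (poch m k / k.factorial * s ^ k) := by
    intro k
    rw [hF]
    simp only
    rw [MeasureTheory.integral_const_mul, ← Real.Gamma_eq_integral (by positivity : (0:ℝ) < m + k),
      Gamma_poch hm]
    ring
  have hnonneg : ∀ k, ∀ u ∈ Ioi (0:ℝ), 0 ≤ F k u := by
    intro k u hu
    have : (0:ℝ) < u := hu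
    rw [hF]; positivity
  have hnorm : ∀ k, ∫ u in Ioi (0:ℝ), ‖F k u‖
      = Real.Gamma m * (poch m k / k.factorial * s ^ k) := by
    intro k
    rw [← hval k]
    refine integral_congr_ae ?_
    filter_upwards [ae_restrict_mem measurableSet_Ioi] with u hu
    exact Real.norm_of_nonneg (hnonneg k u hu)
  have hsum : Summable fun k => ∫ u in Ioi (0:ℝ), ‖F k u‖ := by
    simp only [hnorm]
    exact (summable_poch hm hs0 hs1).mul_left _
  have key := MeasureTheory.hasSum_integral_of_summable_integral_norm hint hsum
  -- compute the integral of the tsum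
  have htsum : ∀ u ∈ Ioi (0:ℝ), (∑' k, F k u) = u ^ (m - 1) * Real.exp (-((1 - s) * u)) := by
    intro u hu
    have hu0 : (0:ℝ) < u := hu
    have hFu : ∀ k : ℕ, F k u = (Real.exp (-u) * u ^ (m - 1)) * ((s * u) ^ k / k.factorial) := by
      intro k
      rw [hF]
      simp only
      rw [show m + k - 1 = (m - 1) + (k:ℝ) by ring, Real.rpow_add hu0, Real.rpow_natCast,
        mul_pow]
      ring
    have hexp : HasSum (fun k : ℕ => (s * u) ^ k / k.factorial) (Real.exp (s * u)) := by
      rw [Real.exp_eq_exp_ℝ]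
      exact NormedSpace.expSeries_div_hasSum_exp (s * u)
    calc (∑' k, F k u) = (Real.exp (-u) * u ^ (m - 1)) * ∑' k, ((s * u) ^ k / k.factorial) := by
            simp only [hFu]; rw [tsum_mul_left]
      _ = (Real.exp (-u) * u ^ (m - 1)) * Real.exp (s * u) := by rw [hexp.tsum_eq]
      _ = u ^ (m - 1) * Real.exp (-((1 - s) * u)) := by
            rw [show -((1 - s) * u) = -u + s * u by ring, Real.exp_add]; ring
  have hI : ∫ u in Ioi (0:ℝ), (∑' k, F k u) = (1 / (1 - s)) ^ m * Real.Gamma m := by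
    rw [setIntegral_congr_fun measurableSet_Ioi htsum]
    exact Real.integral_rpow_mul_exp_neg_mul_Ioi hm h1s
  rw [hI] at key
  simp only [hval] at key
  have hΓ : Real.Gamma m ≠ 0 := (Real.Gamma_pos_of_pos hm).ne'
  have key2 := key.div_const (Real.Gamma m)
  have h1 : (1 / (1 - s)) ^ m * Real.Gamma m / Real.Gamma m = (1 - s) ^ (-m) := by
    rw [mul_div_assoc, div_self hΓ, mul_one, one_div, ← Real.rpow_neg_one,
      ← Real.rpow_mul h1s.le, neg_one_mul]
  rw [h1] at key2
  refine key2.congr_fun fun k => ?_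
  field_simp

lemma hasSum_binom' {m s : ℝ} (hm : 0 < m) (hs0 : 0 ≤ s) (hs1 : s < 1) :
    HasSum (fun k : ℕ => poch m k * (k + 1) / k.factorial * s ^ k)
      ((1 - s) ^ (-(m + 1)) * (1 - s + m * s)) := by
  have h1s : (0:ℝ) < 1 - s := by linarith
  have hS1 := hasSum_binom hm hs0 hs1
  -- the k-weighted sum
  have hS2 : HasSum (fun k : ℕ => poch m k * k / k.factorial * s ^ k)
      (m * s * (1 - s) ^ (-(m + 1))) := by
    have hb := (hasSum_binom (m := m + 1) (by linarith) hs0 hs1).mul_left (m * s)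
    have hshift : (fun n : ℕ => (fun k : ℕ => poch m k * k / k.factorial * s ^ k) (n + 1))
        = fun n : ℕ => m * s * (poch (m + 1) n / n.factorial * s ^ n) := by
      funext n
      simp only
      rw [poch_succ_left, Nat.factorial_succ, pow_succ]
      push_cast
      have h1 : ((n:ℝ) + 1) ≠ 0 := by positivity
      have h2 : ((n.factorial : ℝ)) ≠ 0 := by positivity
      field_simp
    have := (hasSum_nat_add_iff (f := fun k : ℕ => poch m k * k / k.factorial * s ^ k) 1).mp
      (by rw [hshift]; exact hb)
    simpa using this
  have := hS1.add hS2
  have halg : (1 - s) ^ (-m) + m * s * (1 - s) ^ (-(m + 1))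
      = (1 - s) ^ (-(m + 1)) * (1 - s + m * s) := by
    have h : (1 - s) ^ (-m) = (1 - s) ^ (-(m + 1)) * (1 - s) := by
      rw [← Real.rpow_add_one h1s.ne']
      norm_num
    rw [h]; ring
  rw [halg] at this
  refine this.congr_fun fun k => ?_
  ring

/-- The mean of the Rician Shadowed power distribution equals `γbar`. -/
theorem stmt_5 (m K γbar : ℝ) (hm : 0 < m) (hK : 0 ≤ K) (hγ : 0 < γbar) :
    (∫ x in Ioi (0:ℝ),
        x * ((m / (m + K)) ^ m * ((1 + K) / γbar) * Real.exp (-(1 + K) * x / γbar) *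
          hyp1F1 m 1 (K * (1 + K) * x / (γbar * (m + K))))) = γbar := by
  have hmK : 0 < m + K := by linarith
  have h1K : 0 < 1 + K := by linarith
  have hbpos : 0 < (1 + K) / γbar := by positivity
  set b : ℝ := (1 + K) / γbar with hb
  set c : ℝ := K * (1 + K) / (γbar * (m + K)) with hc
  have hc0 : 0 ≤ c := by positivity
  set s : ℝ := K / (m + K) with hs
  have hs0 : 0 ≤ s := by positivity
  have hs1 : s < 1 := by rw [hs, div_lt_one hmK]; linarith
  set A : ℝ := (m / (m + K)) ^ m with hA
  have hA0 : 0 ≤ A := Real.rpow_nonneg (by positivity) _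
  set E : ℝ := A * ((1 + K) / γbar) * (γbar / (1 + K)) ^ (2:ℕ) with hE
  set F : ℕ → ℝ → ℝ := fun k x =>
    (x * (A * ((1 + K) / γbar) * Real.exp (-(1 + K) * x / γbar))) *
      (poch m k / (poch 1 k * (k.factorial : ℝ)) * (K * (1 + K) * x / (γbar * (m + K))) ^ k)
    with hF
  have hFeq : ∀ k, ∀ x ∈ Ioi (0:ℝ),
      (A * ((1 + K) / γbar) * (poch m k / ((k.factorial : ℝ) * k.factorial)) * c ^ k)
        * (x ^ ((k:ℝ) + 2 - 1) * Real.exp (-(b * x))) = F k x := by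
    intro k x hx
    have hx0 : (0:ℝ) < x := hx
    rw [hF]; simp only
    rw [poch_one_eval]
    have hzx : K * (1 + K) * x / (γbar * (m + K)) = c * x := by rw [hc]; field_simp
    have hxp : x ^ ((k:ℝ) + 2 - 1) = x ^ (k + 1 : ℕ) := by
      rw [show (k:ℝ) + 2 - 1 = ((k + 1 : ℕ) : ℝ) by push_cast; ring, Real.rpow_natCast]
    have hbx : -(1 + K) * x / γbar = -(b * x) := by rw [hb]; field_simp
    rw [hzx, mul_pow, hxp, hbx, pow_succ]
    ring
  have hint : ∀ k, Integrable (F k) (volume.restrict (Ioi 0)) := by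
    intro k
    have base : IntegrableOn (fun x : ℝ => x ^ ((k:ℝ) + 2 - 1) * Real.exp (-(b * x))) (Ioi 0) := by
      have h := integrableOn_rpow_mul_exp_neg_mul_rpow (p := 1) (s := (k:ℝ) + 1) (b := b)
        (by have : (0:ℝ) ≤ (k:ℝ) := Nat.cast_nonneg k; linarith) one_pos hbpos
      refine h.congr_fun (fun x hx => ?_) measurableSet_Ioi
      dsimp only
      rw [Real.rpow_one, neg_mul, show (k:ℝ) + 2 - 1 = (k:ℝ) + 1 by ring]
    exact IntegrableOn.congr_fun (base.const_mul _) (fun x hx => hFeq k x hx) measurableSet_Ioi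
  have hIval : ∀ k, (∫ x in Ioi (0:ℝ), F k x)
      = E * (poch m k * (k + 1) / k.factorial * s ^ k) := by
    intro k
    rw [← setIntegral_congr_fun measurableSet_Ioi (hFeq k), MeasureTheory.integral_const_mul,
      Real.integral_rpow_mul_exp_neg_mul_Ioi (by positivity) hbpos]
    have hΓ : Real.Gamma ((k:ℝ) + 2) = ((k + 1).factorial : ℝ) := by
      rw [show (k:ℝ) + 2 = ((k + 1 : ℕ) : ℝ) + 1 by push_cast; ring,
        Real.Gamma_nat_eq_factorial]
    have hpow : (1 / b) ^ ((k:ℝ) + 2) = (γbar / (1 + K)) ^ (k + 2 : ℕ) := by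
      rw [show (k:ℝ) + 2 = ((k + 2 : ℕ) : ℝ) by push_cast; ring, Real.rpow_natCast, hb,
        one_div_div]
    have hfact : (((k + 1).factorial : ℕ) : ℝ) = ((k:ℝ) + 1) * k.factorial := by
      rw [Nat.factorial_succ]; push_cast; ring
    have hsk : c * (γbar / (1 + K)) = s := by rw [hc, hs]; field_simp
    have hck : c ^ k * (γbar / (1 + K)) ^ k = s ^ k := by rw [← mul_pow, hsk]
    rw [hΓ, hpow, hfact, hE, pow_add, ← hck]
    have hk0 : ((k.factorial : ℕ) : ℝ) ≠ 0 := by positivity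
    field_simp
  have hnonneg : ∀ k, ∀ x ∈ Ioi (0:ℝ), 0 ≤ F k x := by
    intro k x hx
    have hx0 : (0:ℝ) < x := hx
    have h1 := poch_pos hm k
    have h2 := poch_pos one_pos k
    rw [hF]
    have hz : 0 ≤ K * (1 + K) * x / (γbar * (m + K)) := by positivity
    positivity
  have hnorm : ∀ k, (∫ x in Ioi (0:ℝ), ‖F k x‖) = ∫ x in Ioi (0:ℝ), F k x := by
    intro k
    refine integral_congr_ae ?_
    filter_upwards [ae_restrict_mem measurableSet_Ioi] with x hx
    exact Real.norm_of_nonneg (hnonneg k x hx)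
  have hsum : Summable fun k => ∫ x in Ioi (0:ℝ), ‖F k x‖ := by
    simp only [hnorm, hIval]
    exact ((hasSum_binom' hm hs0 hs1).summable.mul_left E)
  have key := MeasureTheory.hasSum_integral_of_summable_integral_norm hint hsum
  -- the value of the sum
  have hq : (0:ℝ) < m / (m + K) := by positivity
  have h1ms : 1 - s = m / (m + K) := by rw [hs]; field_simp; ring
  have hT2 : 1 - s + m * s = m * (1 + K) / (m + K) := by rw [hs]; field_simp; ring
  have hAr : A * (m / (m + K)) ^ (-(m + 1)) = (m + K) / m := by
    rw [hA, ← Real.rpow_add hq, show m + -(m + 1) = -1 by ring, Real.rpow_neg_one, inv_div]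
  have hET : E * ((1 - s) ^ (-(m + 1)) * (1 - s + m * s)) = γbar := by
    rw [hT2, h1ms, hE]
    rw [show A * ((1 + K) / γbar) * (γbar / (1 + K)) ^ (2:ℕ) *
        ((m / (m + K)) ^ (-(m + 1)) * (m * (1 + K) / (m + K)))
      = (A * (m / (m + K)) ^ (-(m + 1))) *
        (((1 + K) / γbar) * (γbar / (1 + K)) ^ (2:ℕ) * (m * (1 + K) / (m + K))) by ring, hAr]
    field_simp
  have hmain : HasSum (fun k => ∫ x in Ioi (0:ℝ), F k x) γbar := by
    have ht := (hasSum_binom' hm hs0 hs1).mul_left E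
    rw [hET] at ht
    exact ht.congr_fun fun k => hIval k
  have hpt : ∀ x ∈ Ioi (0:ℝ),
      x * (A * ((1 + K) / γbar) * Real.exp (-(1 + K) * x / γbar) *
        hyp1F1 m 1 (K * (1 + K) * x / (γbar * (m + K)))) = ∑' k, F k x := by
    intro x hx
    rw [hyp1F1, hF]
    calc x * (A * ((1 + K) / γbar) * Real.exp (-(1 + K) * x / γbar) *
          ∑' k : ℕ, poch m k / (poch 1 k * (k.factorial : ℝ)) *
            (K * (1 + K) * x / (γbar * (m + K))) ^ k)
        = (x * (A * ((1 + K) / γbar) * Real.exp (-(1 + K) * x / γbar))) *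
          ∑' k : ℕ, poch m k / (poch 1 k * (k.factorial : ℝ)) *
            (K * (1 + K) * x / (γbar * (m + K))) ^ k := by ring
      _ = _ := (tsum_mul_left).symm
  rw [setIntegral_congr_fun measurableSet_Ioi hpt]
  exact key.unique hmain
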